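/- Fix k₀ ∈ ℕ. The assignment A ↦ f_A is injective on subsets A of {n ∈ ℕ : n ≥ k₀ + 2}: if A, B ⊆ {n : n ≥ k₀+2} and f_A and f_B agree as functions on Σ n : ℕ, SimpleGraph (Fin n), then A = B. Moreover, for every such A and every k ≤ k₀, the rows of the restricted connection matrix of f_A (rows and columns indexed by k-graphs on Fin n vertex sets that have no vertices or at least one vertex outside the range of the labeling; entry at (X,Y) equal to f_A of the underlying graph of X ⊔ₖ Y) span an ℝ-subspace of the function space of dimension at most 2. Consequently there are continuum many real-valued graph parameters all of whose restricted connection matrices for k ≤ k₀ have rank at most 2. -/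

import Mathlib

/-- Same-side adjacency on the disjoint union of two graphs. -/
def sumAdj {V₁ V₂ : Type*} (G₁ : SimpleGraph V₁) (G₂ : SimpleGraph V₂) :
    V₁ ⊕ V₂ → V₁ ⊕ V₂ → Prop
  | Sum.inl a, Sum.inl b => G₁.Adj a b
  | Sum.inr a, Sum.inr b => G₂.Adj a b
  | _, _ => False

lemma sumAdj_symm {V₁ V₂ : Type*} (G₁ : SimpleGraph V₁) (G₂ : SimpleGraph V₂)
    {u v : V₁ ⊕ V₂} (h : sumAdj G₁ G₂ u v) : sumAdj G₁ G₂ v u := by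
  cases u <;> cases v <;> simp_all [sumAdj] <;> exact h.symm

/-- The generating relation for gluing two `k`-graphs: identify vertices
carrying the same label. -/
def glueRel {k : ℕ} {V₁ V₂ : Type*} (ℓ₁ : Fin k → Option V₁) (ℓ₂ : Fin k → Option V₂)
    (u v : V₁ ⊕ V₂) : Prop :=
  ∃ (i : Fin k) (v₁ : V₁) (v₂ : V₂),
    ℓ₁ i = some v₁ ∧ ℓ₂ i = some v₂ ∧ u = Sum.inl v₁ ∧ v = Sum.inr v₂

def glueSetoid {k : ℕ} {V₁ V₂ : Type*} (ℓ₁ : Fin k → Option V₁)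
    (ℓ₂ : Fin k → Option V₂) : Setoid (V₁ ⊕ V₂) :=
  Relation.EqvGen.setoid (glueRel ℓ₁ ℓ₂)

/-- The vertex type of the gluing of two `k`-graphs. -/
def GlueVert {k : ℕ} {V₁ V₂ : Type*} (ℓ₁ : Fin k → Option V₁)
    (ℓ₂ : Fin k → Option V₂) : Type _ :=
  Quotient (glueSetoid ℓ₁ ℓ₂)

def glueMk {k : ℕ} {V₁ V₂ : Type*} (ℓ₁ : Fin k → Option V₁)
    (ℓ₂ : Fin k → Option V₂) (u : V₁ ⊕ V₂) : GlueVert ℓ₁ ℓ₂ :=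
  Quotient.mk (glueSetoid ℓ₁ ℓ₂) u

/-- The underlying graph of the gluing of two `k`-graphs. -/
def glueGraph {k : ℕ} {V₁ V₂ : Type*} (G₁ : SimpleGraph V₁) (ℓ₁ : Fin k → Option V₁)
    (G₂ : SimpleGraph V₂) (ℓ₂ : Fin k → Option V₂) :
    SimpleGraph (GlueVert ℓ₁ ℓ₂) where
  Adj x y := x ≠ y ∧ ∃ u v : V₁ ⊕ V₂,
    glueMk ℓ₁ ℓ₂ u = x ∧ glueMk ℓ₁ ℓ₂ v = y ∧ sumAdj G₁ G₂ u v
  symm := ⟨fun x y ⟨hne, u, v, hu, hv, h⟩ => ⟨hne.symm, v, u, hv, hu, sumAdj_symm G₁ G₂ h⟩⟩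
  loopless := ⟨fun x h => h.1 rfl⟩

/-- The labeling of the gluing of two `k`-graphs. -/
def glueLabel {k : ℕ} {V₁ V₂ : Type*} (ℓ₁ : Fin k → Option V₁)
    (ℓ₂ : Fin k → Option V₂) (i : Fin k) : Option (GlueVert ℓ₁ ℓ₂) :=
  match ℓ₁ i with
  | some v => some (glueMk ℓ₁ ℓ₂ (Sum.inl v))
  | none => (ℓ₂ i).map fun v => glueMk ℓ₁ ℓ₂ (Sum.inr v)

noncomputable instance {k : ℕ} {V₁ V₂ : Type*} [Fintype V₁] [Fintype V₂]
    (ℓ₁ : Fin k → Option V₁) (ℓ₂ : Fin k → Option V₂) : Fintype (GlueVert ℓ₁ ℓ₂) := by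
  classical exact Quotient.fintype (glueSetoid ℓ₁ ℓ₂)

/-- A graph is `m`-connected if it has more than `m` vertices and removing any
fewer than `m` vertices leaves it connected. -/
def IsMConnected {V : Type*} [Fintype V] (m : ℕ) (G : SimpleGraph V) : Prop :=
  m < Fintype.card V ∧ ∀ S : Set V, S.ncard < m → (G.induce Sᶜ).Connected

open Classical in
/-- The graph parameter `f_A`: the number of vertices if the graph is
`(k₀+1)`-connected with number of vertices in `A`, and `0` otherwise. -/
noncomputable def fA (k₀ : ℕ) (A : Set ℕ) {V : Type*} [Fintype V] (G : SimpleGraph V) : ℝ :=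
  if IsMConnected (k₀ + 1) G ∧ Fintype.card V ∈ A then (Fintype.card V : ℝ) else 0

/-- `k`-graphs on vertex sets `Fin n` that have no vertices or at least one
vertex outside the range of the labeling. -/
def Idx (k : ℕ) :=
  {X : Σ n : ℕ, SimpleGraph (Fin n) × (Fin k → Option (Fin n)) //
    X.1 = 0 ∨ ∃ v : Fin X.1, ∀ i : Fin k, X.2.2 i ≠ some v}

/-- Transport a graph on a finite vertex type to a graph on `Fin n`. -/
noncomputable def toFinGraph {V : Type} [Fintype V] (G : SimpleGraph V) :
    Σ n : ℕ, SimpleGraph (Fin n) :=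
  ⟨Fintype.card V, G.map (Fintype.equivFin V).toEmbedding⟩

/-- Which side-elements are labeled. -/
def IsLab {k : ℕ} {V₁ V₂ : Type*} (ℓ₁ : Fin k → Option V₁) (ℓ₂ : Fin k → Option V₂) :
    V₁ ⊕ V₂ → Prop :=
  Sum.elim (fun a => ∃ i, ℓ₁ i = some a) (fun b => ∃ i, ℓ₂ i = some b)

lemma eqvGen_lab {k : ℕ} {V₁ V₂ : Type*} {ℓ₁ : Fin k → Option V₁} {ℓ₂ : Fin k → Option V₂}
    {u v : V₁ ⊕ V₂} (h : Relation.EqvGen (glueRel ℓ₁ ℓ₂) u v) :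
    u = v ∨ (IsLab ℓ₁ ℓ₂ u ∧ IsLab ℓ₁ ℓ₂ v) := by
  induction h with
  | rel u v h =>
    obtain ⟨i, v₁, v₂, h1, h2, rfl, rfl⟩ := h
    exact Or.inr ⟨⟨i, h1⟩, ⟨i, h2⟩⟩
  | refl u => exact Or.inl rfl
  | symm u v _ ih => rcases ih with rfl | ⟨h1, h2⟩; exacts [Or.inl rfl, Or.inr ⟨h2, h1⟩]
  | trans u v w _ _ ih1 ih2 =>
    rcases ih1 with rfl | ⟨h1, h2⟩
    · exact ih2
    · rcases ih2 with rfl | ⟨h3, h4⟩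
      · exact Or.inr ⟨h1, h2⟩
      · exact Or.inr ⟨h1, h4⟩

lemma glueMk_eq_iff {k : ℕ} {V₁ V₂ : Type*} {ℓ₁ : Fin k → Option V₁} {ℓ₂ : Fin k → Option V₂}
    {u v : V₁ ⊕ V₂} :
    glueMk ℓ₁ ℓ₂ u = glueMk ℓ₁ ℓ₂ v ↔ Relation.EqvGen (glueRel ℓ₁ ℓ₂) u v :=
  ⟨fun h => Quotient.exact h, fun h => Quotient.sound h⟩

lemma not_isMConnected_glue {k k₀ : ℕ} (hk : k ≤ k₀) {V₁ V₂ : Type*} [Fintype V₁] [Fintype V₂]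
    (G₁ : SimpleGraph V₁) (ℓ₁ : Fin k → Option V₁)
    (G₂ : SimpleGraph V₂) (ℓ₂ : Fin k → Option V₂)
    (vX : V₁) (hvX : ∀ i, ℓ₁ i ≠ some vX)
    (vY : V₂) (hvY : ∀ i, ℓ₂ i ≠ some vY) :
    ¬ IsMConnected (k₀ + 1) (glueGraph G₁ ℓ₁ G₂ ℓ₂) := by
  classical
  rintro ⟨-, hconn⟩
  set S : Set (GlueVert ℓ₁ ℓ₂) :=
    {c | (∃ a, glueMk ℓ₁ ℓ₂ (Sum.inl a) = c) ∧ ∃ b, glueMk ℓ₁ ℓ₂ (Sum.inr b) = c} with hS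
  -- S is small
  have hsub : S ⊆ Set.range (fun i : Fin k =>
      match ℓ₁ i with
      | some v => glueMk ℓ₁ ℓ₂ (Sum.inl v)
      | none => glueMk ℓ₁ ℓ₂ (Sum.inl vX)) := by
    rintro c ⟨⟨a, ha⟩, ⟨b, hb⟩⟩
    have h : glueMk ℓ₁ ℓ₂ (Sum.inl a) = glueMk ℓ₁ ℓ₂ (Sum.inr b) := ha.trans hb.symm
    rcases eqvGen_lab (glueMk_eq_iff.1 h) with h' | ⟨⟨i, hi⟩, -⟩
    · exact absurd h' (by simp)
    · exact ⟨i, by simp only [hi]; exact ha⟩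
  have hcard : S.ncard ≤ k := by
    refine le_trans (Set.ncard_le_ncard hsub (Set.toFinite _)) ?_
    rw [← Set.image_univ]
    refine le_trans (Set.ncard_image_le (Set.toFinite _)) ?_
    simp [Set.ncard_univ]
  have hxL : glueMk ℓ₁ ℓ₂ (Sum.inl vX) ∈ Sᶜ := by
    rintro ⟨-, b, hb⟩
    rcases eqvGen_lab (glueMk_eq_iff.1 hb) with h' | ⟨-, ⟨i, hi⟩⟩
    · exact absurd h' (by simp)
    · exact hvX i hi
  have hxR : glueMk ℓ₁ ℓ₂ (Sum.inr vY) ∈ Sᶜ := by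
    rintro ⟨⟨a, ha⟩, -⟩
    rcases eqvGen_lab (glueMk_eq_iff.1 ha) with h' | ⟨-, ⟨i, hi⟩⟩
    · exact absurd h' (by simp)
    · exact hvY i hi
  have hC := hconn S (by omega)
  -- walk invariant: having a left representative
  have key : ∀ (x y : ↥Sᶜ), ((glueGraph G₁ ℓ₁ G₂ ℓ₂).induce Sᶜ).Walk x y →
      (∃ a, glueMk ℓ₁ ℓ₂ (Sum.inl a) = (x : GlueVert ℓ₁ ℓ₂)) →
      ∃ a, glueMk ℓ₁ ℓ₂ (Sum.inl a) = (y : GlueVert ℓ₁ ℓ₂) := by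
    intro x y w
    induction w with
    | nil => exact id
    | @cons x z y h p ih =>
      intro hx
      apply ih
      have h' : (glueGraph G₁ ℓ₁ G₂ ℓ₂).Adj x.1 z.1 := h
      obtain ⟨-, u, v, hu, hv, hadj⟩ := h'
      match u, v, hadj with
      | Sum.inl a', Sum.inl b', _ => exact ⟨b', hv⟩
      | Sum.inr a', Sum.inr b', _ =>
        obtain ⟨a, ha⟩ := hx
        exact absurd ⟨⟨a, ha⟩, ⟨a', hu⟩⟩ x.2
  obtain ⟨w⟩ := hC.preconnected ⟨_, hxL⟩ ⟨_, hxR⟩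
  obtain ⟨a, ha⟩ := key _ _ w ⟨vX, rfl⟩
  exact hxR ⟨⟨a, ha⟩, ⟨vY, rfl⟩⟩

/-- The empty `k`-graph as an element of `Idx k`. -/
def Idx0 (k : ℕ) : Idx k := ⟨⟨0, ⊥, fun _ => none⟩, Or.inl rfl⟩

lemma eq_Idx0 {k : ℕ} (X : Idx k) (h : X.1.1 = 0) : X = Idx0 k := by
  obtain ⟨⟨n, G, ℓ⟩, hX⟩ := X
  dsimp at h
  subst h
  apply Subtype.ext
  have hG : G = ⊥ := by ext a b; exact a.elim0
  have hl : ℓ = fun _ => none := by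
    funext i
    rcases h : ℓ i with - | v
    · rfl
    · exact v.elim0
  subst hG hl
  rfl

lemma rank_le_two_of_zero {k : ℕ} (w : Idx k → Idx k → ℝ)
    (H1 : ∀ X Y : Idx k, X.1.1 ≠ 0 → Y.1.1 ≠ 0 → w X Y = 0) :
    Module.rank ℝ ↥(Submodule.span ℝ (Set.range w)) ≤ 2 := by
  classical
  set g : Idx k → ℝ := w (Idx0 k) with hg
  set d : Idx k → ℝ := fun Y => if Y.1.1 = 0 then 1 else 0 with hd
  have hsub : Set.range w ⊆ ↑(Submodule.span ℝ ({g, d} : Set (Idx k → ℝ))) := by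
    rintro - ⟨X, rfl⟩
    by_cases hX : X.1.1 = 0
    · rw [eq_Idx0 X hX]
      exact Submodule.subset_span (Set.mem_insert _ _)
    · have : w X = (w X (Idx0 k)) • d := by
        funext Y
        by_cases hY : Y.1.1 = 0
        · rw [eq_Idx0 Y hY]
          show w X (Idx0 k) = w X (Idx0 k) * (if (Idx0 k).1.1 = 0 then (1:ℝ) else 0)
          exact (mul_one _).symm
        · simp [H1 X Y hX hY, hd, if_neg hY]
      rw [this]
      exact Submodule.smul_mem _ _
        (Submodule.subset_span (Set.mem_insert_of_mem _ rfl))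
  have hle : Submodule.span ℝ (Set.range w) ≤ Submodule.span ℝ {g, d} := by
    rw [Submodule.span_le]; exact hsub
  refine le_trans (Submodule.rank_mono hle) (le_trans (rank_span_le (R := ℝ) _) ?_)
  refine le_trans (Cardinal.mk_insert_le ..) ?_
  rw [Cardinal.mk_singleton, one_add_one_eq_two]

lemma isMConnected_of_iso {V W : Type*} [Fintype V] [Fintype W]
    {G : SimpleGraph V} {H : SimpleGraph W} (e : G ≃g H) {m : ℕ}
    (hG : IsMConnected m G) : IsMConnected m H := by
  obtain ⟨hc, hconn⟩ := hG
  constructor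
  · rwa [← Fintype.card_congr e.toEquiv]
  · intro S hS
    have hT : (⇑e.toEquiv ⁻¹' S).ncard = S.ncard := by
      rw [← Equiv.image_symm_eq_preimage]
      exact Set.ncard_image_of_injective _ e.toEquiv.symm.injective
    have hC := hconn (⇑e.toEquiv ⁻¹' S) (by rwa [hT])
    have iso : (G.induce (⇑e.toEquiv ⁻¹' S)ᶜ) ≃g (H.induce Sᶜ) :=
      { toEquiv := e.toEquiv.subtypeEquiv fun v => by simp
        map_rel_iff' := by intro a b; exact e.map_rel_iff }
    exact iso.connected_iff.1 hC

lemma isMConnected_iff_of_iso {V W : Type*} [Fintype V] [Fintype W]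
    {G : SimpleGraph V} {H : SimpleGraph W} (e : G ≃g H) (m : ℕ) :
    IsMConnected m G ↔ IsMConnected m H :=
  ⟨isMConnected_of_iso e, isMConnected_of_iso e.symm⟩

lemma fA_iso (k₀ : ℕ) (A : Set ℕ) {V W : Type*} [Fintype V] [Fintype W]
    {G : SimpleGraph V} {H : SimpleGraph W} (e : G ≃g H) :
    fA k₀ A G = fA k₀ A H := by
  have hcard : Fintype.card V = Fintype.card W := Fintype.card_congr e.toEquiv
  unfold fA
  rw [hcard]
  by_cases h : IsMConnected (k₀ + 1) H ∧ Fintype.card W ∈ A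
  · rw [if_pos h, if_pos ⟨(isMConnected_iff_of_iso e _).2 h.1, h.2⟩]
  · rw [if_neg h, if_neg]
    rintro ⟨h1, h2⟩
    exact h ⟨(isMConnected_iff_of_iso e _).1 h1, h2⟩

/-- A graph is isomorphic to its image under mapping along an equivalence. -/
def mapIso {V W : Type*} (G : SimpleGraph V) (e : V ≃ W) :
    G ≃g G.map e.toEmbedding :=
  { toEquiv := e
    map_rel_iff' := by
      intro a b
      simp only [SimpleGraph.map_adj, Equiv.coe_toEmbedding]
      constructor
      · rintro ⟨-, a', b', h, ha, hb⟩
        rwa [← e.injective ha, ← e.injective hb]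
      · exact fun h => ⟨e.injective.ne h.ne, a, b, h, rfl, rfl⟩ }

lemma fA_toFinGraph (k₀ : ℕ) (A : Set ℕ) {V : Type} [Fintype V] (G : SimpleGraph V) :
    fA k₀ A (toFinGraph G).2 = fA k₀ A G :=
  (fA_iso k₀ A (mapIso G (Fintype.equivFin V))).symm

lemma fA_top (k₀ : ℕ) (A : Set ℕ) {n : ℕ} (hn : k₀ + 2 ≤ n) (hA : n ∈ A) :
    fA k₀ A (⊤ : SimpleGraph (Fin n)) = n := by
  unfold fA
  rw [if_pos, Fintype.card_fin]
  refine ⟨⟨by simp; omega, ?_⟩, by simpa using hA⟩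
  intro S hS
  have hne : Sᶜ.Nonempty := by
    by_contra h'
    have hSu : S = Set.univ := by
      rw [← Set.compl_empty_iff]
      exact Set.not_nonempty_iff_eq_empty.1 h'
    rw [hSu, Set.ncard_univ, Nat.card_eq_fintype_card, Fintype.card_fin] at hS
    omega
  obtain ⟨v, hv⟩ := hne
  haveI : Nonempty ↥Sᶜ := ⟨⟨v, hv⟩⟩
  refine ⟨fun a b => ?_⟩
  by_cases hab : a = b
  · exact hab ▸ SimpleGraph.Reachable.refl a
  · exact SimpleGraph.Adj.reachable (by
      show (⊤ : SimpleGraph (Fin n)).Adj a.1 b.1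
      simpa using fun h => hab (Subtype.ext h))

lemma fA_ne_zero_mem (k₀ : ℕ) (A : Set ℕ) {n : ℕ} (h : fA k₀ A (⊤ : SimpleGraph (Fin n)) ≠ 0) :
    n ∈ A := by
  unfold fA at h
  by_cases hc : IsMConnected (k₀ + 1) (⊤ : SimpleGraph (Fin n)) ∧ Fintype.card (Fin n) ∈ A
  · simpa using hc.2
  · exact absurd (if_neg hc) h

/-- `A ↦ f_A` is injective on subsets of `{n | n ≥ k₀ + 2}`; for each such `A`
and `k ≤ k₀` the rows of the restricted connection matrix of `f_A` span a
subspace of dimension at most `2`; consequently there are continuum many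
real-valued graph parameters all of whose restricted connection matrices for
`k ≤ k₀` have rank at most `2`. -/
theorem fA_injective_rank_le_two_continuum (k₀ : ℕ) :
    (∀ A B : Set ℕ, A ⊆ {n : ℕ | k₀ + 2 ≤ n} → B ⊆ {n : ℕ | k₀ + 2 ≤ n} →
      (∀ p : Σ n : ℕ, SimpleGraph (Fin n), fA k₀ A p.2 = fA k₀ B p.2) → A = B) ∧
    (∀ A : Set ℕ, A ⊆ {n : ℕ | k₀ + 2 ≤ n} → ∀ k : ℕ, k ≤ k₀ →
      Module.rank ℝ
        ↥(Submodule.span ℝ (Set.range (fun X : Idx k =>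
          fun Y : Idx k => fA k₀ A (glueGraph X.1.2.1 X.1.2.2 Y.1.2.1 Y.1.2.2)))) ≤ 2) ∧
    (∃ P : Set ((Σ n : ℕ, SimpleGraph (Fin n)) → ℝ),
      Cardinal.mk P = Cardinal.continuum ∧
      ∀ f ∈ P, ∀ k : ℕ, k ≤ k₀ →
        Module.rank ℝ
          ↥(Submodule.span ℝ (Set.range (fun X : Idx k =>
            fun Y : Idx k =>
              f (toFinGraph (glueGraph X.1.2.1 X.1.2.2 Y.1.2.1 Y.1.2.2))))) ≤ 2) := by
  have key : ∀ A B : Set ℕ, A ⊆ {n : ℕ | k₀ + 2 ≤ n} →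
      (∀ p : Σ n : ℕ, SimpleGraph (Fin n), fA k₀ A p.2 = fA k₀ B p.2) → A ⊆ B := by
    intro A B hA h n hn
    have hn2 : k₀ + 2 ≤ n := hA hn
    have h1 : fA k₀ A (⊤ : SimpleGraph (Fin n)) = n := fA_top k₀ A hn2 hn
    have h2 : fA k₀ A (⊤ : SimpleGraph (Fin n)) = fA k₀ B (⊤ : SimpleGraph (Fin n)) :=
      h ⟨n, ⊤⟩
    apply fA_ne_zero_mem k₀ B
    rw [← h2, h1]
    exact Nat.cast_ne_zero.2 (by omega)
  have part1 : ∀ A B : Set ℕ, A ⊆ {n : ℕ | k₀ + 2 ≤ n} → B ⊆ {n : ℕ | k₀ + 2 ≤ n} →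
      (∀ p : Σ n : ℕ, SimpleGraph (Fin n), fA k₀ A p.2 = fA k₀ B p.2) → A = B :=
    fun A B hA hB h =>
      Set.Subset.antisymm (key A B hA h) (key B A hB fun p => (h p).symm)
  have hzero : ∀ (A : Set ℕ) (k : ℕ), k ≤ k₀ → ∀ X Y : Idx k, X.1.1 ≠ 0 → Y.1.1 ≠ 0 →
      fA k₀ A (glueGraph X.1.2.1 X.1.2.2 Y.1.2.1 Y.1.2.2) = 0 := by
    intro A k hk X Y hX hY
    obtain h1 | ⟨vX, hvX⟩ := X.2
    · exact absurd h1 hX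
    obtain h2 | ⟨vY, hvY⟩ := Y.2
    · exact absurd h2 hY
    unfold fA
    rw [if_neg]
    rintro ⟨hc, -⟩
    exact not_isMConnected_glue hk _ _ _ _ vX hvX vY hvY hc
  refine ⟨part1, fun A _ k hk => rank_le_two_of_zero _ (hzero A k hk), ?_⟩
  set T : Set ℕ := {n : ℕ | k₀ + 2 ≤ n} with hT
  set F : Set ℕ → ((Σ n : ℕ, SimpleGraph (Fin n)) → ℝ) := fun A p => fA k₀ A p.2 with hF
  refine ⟨F '' 𝒫 T, ?_, ?_⟩
  · have hinj : Set.InjOn F (𝒫 T) := fun A hA B hB hFAB =>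
      part1 A B hA hB fun p => congrFun hFAB p
    rw [Cardinal.mk_image_eq_of_injOn F _ hinj, Cardinal.mk_powerset]
    have hTinf : T.Infinite := by
      rw [show T = Set.Ici (k₀ + 2) from rfl]
      exact Set.Ici_infinite _
    haveI := hTinf.to_subtype
    rw [Cardinal.mk_eq_aleph0 ↥T, Cardinal.two_power_aleph0]
  · rintro f ⟨A, -, rfl⟩ k hk
    refine rank_le_two_of_zero _ fun X Y hX hY => ?_
    show fA k₀ A (toFinGraph (glueGraph X.1.2.1 X.1.2.2 Y.1.2.1 Y.1.2.2)).2 = 0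
    rw [fA_toFinGraph]
    exact hzero A k hk X Y hX hY
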